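/- For j ≥ 2 and n > j, there is a bijection between the set of pairs (λ, μ) of compositions of n into parts from {1, j} with λ_1 = j, μ_1 = 1, and PS(λ) ∩ PS(μ) = {n}, and the set of permutations π of {1,...,n−1} all of whose displacements π(i) − i lie in {−2, −1, j−2}. -/
import Mathlib

/-- The set of partial sums of a list: sums of nonempty prefixes. -/
def PSums (l : List ℕ) : Set ℕ :=
  {m | ∃ k, 0 < k ∧ k ≤ l.length ∧ (l.take k).sum = m}

namespace Stmt8

/-- membership in {s} ∪ (s + partial sums of l) -/
def memP : List ℕ → ℕ → ℕ → Prop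
  | [], s, y => y = s
  | p :: t, s, y => y = s ∨ memP t (s + p) y

/-- next element of the partial-sum set strictly above y -/
def nxt : List ℕ → ℕ → ℕ → ℕ
  | [], _, _ => 0
  | p :: t, s, y => if y < s + p then s + p else nxt t (s + p) y

lemma memP_self (l : List ℕ) (s : ℕ) : memP l s s := by
  cases l with
  | nil => rfl
  | cons p t => exact Or.inl rfl

lemma memP_le {l : List ℕ} {s y : ℕ} (h : memP l s y) : s ≤ y ∧ y ≤ s + l.sum := by
  induction l generalizing s with
  | nil => simp [memP] at h; omega
  | cons p t ih =>
    rcases h with h | h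
    · subst h; exact ⟨le_rfl, Nat.le_add_right _ _⟩
    · have := ih h
      simp [List.sum_cons]
      omega

lemma memP_total (l : List ℕ) (s : ℕ) : memP l s (s + l.sum) := by
  induction l generalizing s with
  | nil => simp [memP]
  | cons p t ih =>
    refine Or.inr ?_
    have := ih (s + p)
    simpa [List.sum_cons, Nat.add_assoc] using this

lemma nxt_spec {j : ℕ} (hj : 1 ≤ j) {l : List ℕ} (hl : ∀ x ∈ l, x = 1 ∨ x = j)
    {s y : ℕ} (h : memP l s y) (hy : y < s + l.sum) :
    memP l s (nxt l s y) ∧ y < nxt l s y ∧ (nxt l s y = y + 1 ∨ nxt l s y = y + j) := by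
  induction l generalizing s with
  | nil => simp [memP] at h; simp [List.sum_nil] at hy; omega
  | cons p t ih =>
    have hp : p = 1 ∨ p = j := hl p (by simp)
    have hppos : 0 < p := by rcases hp with h1 | h1 <;> omega
    rcases h with h | h
    · subst h
      have hlt : y < y + p := by omega
      simp only [nxt, if_pos (by omega : y < y + p)]
      refine ⟨Or.inr ?_, by omega, by rcases hp with h1 | h1 <;> simp [h1]⟩
      have := memP_self t (y + p)
      exact this
    · have hle := (memP_le h).1
      simp only [nxt, if_neg (by omega : ¬ y < s + p)]
      have ht : ∀ x ∈ t, x = 1 ∨ x = j := fun x hx => hl x (by simp [hx])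
      have hy' : y < s + p + t.sum := by simp [List.sum_cons] at hy; omega
      obtain ⟨m1, m2, m3⟩ := ih ht h hy'
      exact ⟨Or.inr m1, m2, m3⟩

lemma nxt_min {l : List ℕ} (hpos : ∀ x ∈ l, 0 < x) {s y z : ℕ}
    (hy : memP l s y) (hz : memP l s z)
    (hyz : y < z) : nxt l s y ≤ z := by
  induction l generalizing s with
  | nil =>
    simp [memP] at hy hz; omega
  | cons p t ih =>
    have hppos : 0 < p := hpos p (by simp)
    have ih := fun {s} => ih (fun x hx => hpos x (by simp [hx])) (s := s)
    rcases hy with hy | hy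
    · rcases hz with hz | hz
      · exact absurd hyz (by omega)
      · have h2 := (memP_le hz).1
        simp only [nxt]
        rw [if_pos (by omega : y < s + p)]
        exact h2
    · have hle := (memP_le hy).1
      simp only [nxt]
      rw [if_neg (by omega : ¬ y < s + p)]
      rcases hz with hz | hz
      · exact absurd hyz (by omega)
      · exact ih hy hz

lemma pred_exists {l : List ℕ} (hpos : ∀ x ∈ l, 0 < x) {s w : ℕ}
    (hw : memP l s w) (hsw : s < w) :
    ∃ p, memP l s p ∧ p < w ∧ nxt l s p = w := by
  induction l generalizing s with
  | nil => simp [memP] at hw; omega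
  | cons p t ih =>
    have hppos : 0 < p := hpos p (by simp)
    rcases hw with hw | hw
    · omega
    · by_cases hcase : w = s + p
      · refine ⟨s, memP_self _ _, by omega, ?_⟩
        simp only [nxt, if_pos (by omega : s < s + p)]
        omega
      · have hsw' : s + p < w := by
          have := (memP_le hw).1; omega
        obtain ⟨q, hq1, hq2, hq3⟩ := ih (fun x hx => hpos x (by simp [hx])) hw hsw'
        refine ⟨q, Or.inr hq1, hq2, ?_⟩
        have hqge := (memP_le hq1).1
        simp only [nxt, if_neg (by omega : ¬ q < s + p)]
        exact hq3

lemma psums_memP {l : List ℕ} (hpos : ∀ x ∈ l, 0 < x) :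
    ∀ s y, (memP l s y ∧ s < y) ↔ ∃ k, 0 < k ∧ k ≤ l.length ∧ s + (l.take k).sum = y := by
  induction l with
  | nil =>
    intro s y
    constructor
    · rintro ⟨h, hs⟩; simp [memP] at h; omega
    · rintro ⟨k, hk, hk2, _⟩; simp at hk2; omega
  | cons p t ih =>
    intro s y
    have hppos : 0 < p := hpos p (by simp)
    constructor
    · rintro ⟨h, hs⟩
      rcases h with h | h
      · omega
      · have hle := (memP_le h).1
        by_cases hcase : y = s + p
        · exact ⟨1, by omega, by simp, by simpa using hcase.symm⟩
        · have := (ih (fun x hx => hpos x (by simp [hx])) (s + p) y).mp ⟨h, by omega⟩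
          obtain ⟨k, hk1, hk2, hk3⟩ := this
          exact ⟨k + 1, by omega, by simpa using hk2, by
            simp [List.take_succ_cons, List.sum_cons]
            omega⟩
    · rintro ⟨k, hk1, hk2, hk3⟩
      match k with
      | 1 =>
        simp [List.take_succ_cons] at hk3
        have hy : y = s + p := by omega
        subst hy
        exact ⟨Or.inr (memP_self _ _), by omega⟩
      | (k' + 2) =>
        simp [List.take_succ_cons, List.sum_cons] at hk3 hk2
        have : memP t (s + p) y ∧ s + p < y := by
          apply (ih (fun x hx => hpos x (by simp [hx])) (s + p) y).mpr
          exact ⟨k' + 1, by omega, by omega, by omega⟩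
        exact ⟨Or.inr this.1, by omega⟩


open scoped Classical in
/-- the successor-or-fix map attached to a pair of compositions -/
noncomputable def Nmap (lam mu : List ℕ) (y : ℕ) : ℕ :=
  if memP lam 0 y then nxt lam 0 y else if memP mu 0 y then nxt mu 0 y else y

section Ctx

variable {n j : ℕ} {lam mu : List ℕ}
  (hj : 2 ≤ j) (hn : j < n)
  (hl : ∀ x ∈ lam, x = 1 ∨ x = j) (hm : ∀ x ∈ mu, x = 1 ∨ x = j)
  (hls : lam.sum = n) (hms : mu.sum = n)
  (hlh : lam.head? = some j) (hmh : mu.head? = some 1)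
  (hdisj : ∀ y, memP lam 0 y → memP mu 0 y → 0 < y → y < n → False)

include hj hlh in
lemma nxt0lam : nxt lam 0 0 = j := by
  cases lam with
  | nil => simp at hlh
  | cons p t =>
    simp at hlh
    subst hlh
    simp only [nxt]
    rw [if_pos (by omega)]
    omega

include hmh in
lemma mem1mu : memP mu 0 1 := by
  cases mu with
  | nil => simp at hmh
  | cons p t =>
    simp at hmh
    subst hmh
    exact Or.inr (memP_self _ _)

include hj hl hm hls hms hlh hmh in
lemma Nmap_cases {y : ℕ} (hy : y + 2 ≤ n) :
    2 ≤ Nmap lam mu y ∧ Nmap lam mu y ≤ n ∧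
      (Nmap lam mu y = y ∨ Nmap lam mu y = y + 1 ∨ Nmap lam mu y = y + j) := by
  unfold Nmap
  by_cases hA : memP lam 0 y
  · rw [if_pos hA]
    obtain ⟨m1, m2, m3⟩ := nxt_spec (by omega) hl hA (by omega)
    have hub := (memP_le m1).2
    have h2 : 2 ≤ nxt lam 0 y := by
      rcases Nat.eq_zero_or_pos y with h0 | h0
      · subst h0; rw [nxt0lam hj hlh]; omega
      · omega
    exact ⟨h2, by omega, by omega⟩
  · rw [if_neg hA]
    have hy0 : 0 < y := by
      rcases Nat.eq_zero_or_pos y with h0 | h0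
      · exact absurd (h0 ▸ memP_self lam 0) hA
      · exact h0
    by_cases hB : memP mu 0 y
    · rw [if_pos hB]
      obtain ⟨m1, m2, m3⟩ := nxt_spec (by omega) hm hB (by omega)
      have hub := (memP_le m1).2
      exact ⟨by omega, by omega, by omega⟩
    · rw [if_neg hB]
      have hy1 : y ≠ 1 := fun h => hB (h ▸ mem1mu hmh)
      exact ⟨by omega, by omega, by omega⟩

include hj hl hm hls hms hdisj in
lemma Nmap_inj {y1 y2 : ℕ} (h1 : y1 + 2 ≤ n) (h2 : y2 + 2 ≤ n)
    (heq : Nmap lam mu y1 = Nmap lam mu y2) : y1 = y2 := by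
  have hlpos : ∀ x ∈ lam, 0 < x := fun x hx => by rcases hl x hx with h | h <;> omega
  have hmpos : ∀ x ∈ mu, 0 < x := fun x hx => by rcases hm x hx with h | h <;> omega
  unfold Nmap at heq
  by_cases hA1 : memP lam 0 y1 <;> by_cases hA2 : memP lam 0 y2
  · -- A-A
    rw [if_pos hA1, if_pos hA2] at heq
    by_contra hne
    rcases Nat.lt_or_ge y1 y2 with hlt | hge
    · have hmin := nxt_min hlpos hA1 hA2 hlt
      have := (nxt_spec (by omega) hl hA2 (by omega)).2.1
      omega
    · have hlt : y2 < y1 := by omega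
      have hmin := nxt_min hlpos hA2 hA1 hlt
      have := (nxt_spec (by omega) hl hA1 (by omega)).2.1
      omega
  · -- A-B or A-C
    rw [if_pos hA1, if_neg hA2] at heq
    exfalso
    obtain ⟨m1, m2, m3⟩ := nxt_spec (by omega : 1 ≤ j) hl hA1 (by omega)
    by_cases hB2 : memP mu 0 y2
    · rw [if_pos hB2] at heq
      obtain ⟨m1', m2', m3'⟩ := nxt_spec (by omega : 1 ≤ j) hm hB2 (by omega)
      set w := nxt lam 0 y1 with hw
      have hwmu : memP mu 0 w := heq ▸ m1'
      have hwub := (memP_le m1).2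
      rcases Nat.lt_or_ge w n with hlt | hge
      · exact hdisj w m1 hwmu (by omega) hlt
      · -- w = n: both gaps are j, forced, giving y1 = y2 = n - j in both sets
        have hwn : w = n := by omega
        have hy1j : w = y1 + j := by omega
        have hy2j : w = y2 + j := by omega
        have : y1 = y2 := by omega
        subst this
        exact hA2 hA1
    · rw [if_neg hB2] at heq
      -- nxt lam y1 = y2 but y2 not in lam: contradiction
      exact hA2 (heq ▸ m1)
  · -- B/C - A
    rw [if_neg hA1, if_pos hA2] at heq
    exfalso
    obtain ⟨m1, m2, m3⟩ := nxt_spec (by omega : 1 ≤ j) hl hA2 (by omega)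
    by_cases hB1 : memP mu 0 y1
    · rw [if_pos hB1] at heq
      obtain ⟨m1', m2', m3'⟩ := nxt_spec (by omega : 1 ≤ j) hm hB1 (by omega)
      set w := nxt lam 0 y2 with hw
      have hwmu : memP mu 0 w := heq ▸ m1'
      have hwub := (memP_le m1).2
      rcases Nat.lt_or_ge w n with hlt | hge
      · exact hdisj w m1 hwmu (by omega) hlt
      · have : y1 = y2 := by omega
        subst this
        exact hA1 hA2
    · rw [if_neg hB1] at heq
      exact hA1 (heq ▸ m1)
  · -- both not in lam
    rw [if_neg hA1, if_neg hA2] at heq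
    by_cases hB1 : memP mu 0 y1 <;> by_cases hB2 : memP mu 0 y2
    · rw [if_pos hB1, if_pos hB2] at heq
      by_contra hne
      rcases Nat.lt_or_ge y1 y2 with hlt | hge
      · have hmin := nxt_min hmpos hB1 hB2 hlt
        have := (nxt_spec (by omega : 1 ≤ j) hm hB2 (by omega)).2.1
        omega
      · have hlt : y2 < y1 := by omega
        have hmin := nxt_min hmpos hB2 hB1 hlt
        have := (nxt_spec (by omega : 1 ≤ j) hm hB1 (by omega)).2.1
        omega
    · rw [if_pos hB1, if_neg hB2] at heq
      exact absurd (heq ▸ (nxt_spec (by omega : 1 ≤ j) hm hB1 (by omega)).1) hB2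
    · rw [if_neg hB1, if_pos hB2] at heq
      exact absurd (heq.symm ▸ (nxt_spec (by omega : 1 ≤ j) hm hB2 (by omega)).1) hB1
    · rw [if_neg hB1, if_neg hB2] at heq
      exact heq

end Ctx
/-- rebuild the gap list from a successor map, with fuel -/
def go (N : ℕ → ℕ) (n : ℕ) : ℕ → ℕ → List ℕ
  | 0, _ => []
  | f+1, y => if y + 1 = n then [1]
      else (N y - y) :: (if N y = n then [] else go N n f (N y))

section Rec

variable {N : ℕ → ℕ} {n j : ℕ}
  (hj : 2 ≤ j) (hn : j < n)
  (HA : ∀ y, y + 2 ≤ n → N y = y ∨ N y = y + 1 ∨ N y = y + j)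
  (HB : ∀ y, y + 2 ≤ n → 2 ≤ N y ∧ N y ≤ n)
  (HC : ∀ y y', y + 2 ≤ n → y' + 2 ≤ n → N y = N y' → y = y')

/-- invariant along orbits -/
def Inv (N : ℕ → ℕ) (n y : ℕ) : Prop := y + 1 = n ∨ (y + 2 ≤ n ∧ y < N y)

include hj HA HB HC in
lemma inv_step {y : ℕ} (hy : y + 2 ≤ n) (hlt : y < N y) :
    N y = n ∨ Inv N n (N y) := by
  rcases Nat.lt_or_ge (N y) n with h | h
  · right
    by_cases h1 : N y + 1 = n
    · exact Or.inl h1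
    · refine Or.inr ⟨by omega, ?_⟩
      rcases HA (N y) (by omega) with hfix | hstep
      · exfalso
        have : y = N y := HC y (N y) (by omega) (by omega) hfix.symm
        omega
      · omega
  · left
    have := (HB y hy).2
    omega

include hj HA HB HC in
lemma go_spec : ∀ f y, n ≤ f + y → Inv N n y →
    (go N n f y).sum = n - y ∧ (∀ x ∈ go N n f y, x = 1 ∨ x = j) := by
  intro f
  induction f with
  | zero =>
    intro y hf hInv
    rcases hInv with h | h <;> [skip; skip] <;> omega
  | succ f ih =>
    intro y hf hInv
    by_cases hstop : y + 1 = n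
    · refine ⟨?_, ?_⟩
      · simp [go, hstop]; omega
      · intro x hx
        simp [go, hstop] at hx
        subst hx
        exact Or.inl rfl
    · rcases hInv with h | h
      · omega
      · obtain ⟨hy2, hlt⟩ := h
        have hA := HA y hy2
        have hB := HB y hy2
        have hpart : N y - y = 1 ∨ N y - y = j := by
          rcases hA with h1 | h1 | h1 <;> omega
        simp only [go, if_neg hstop]
        by_cases hend : N y = n
        · rw [if_pos hend]
          constructor
          · simp; omega
          · intro x hx; simp at hx; subst hx; exact hpart
        · rw [if_neg hend]
          rcases inv_step hj HA HB HC hy2 hlt with h | h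
          · exact absurd h hend
          · obtain ⟨ihsum, ihparts⟩ := ih (N y) (by omega) h
            constructor
            · simp [ihsum]; omega
            · intro x hx
              simp at hx
              rcases hx with hx | hx
              · subst hx; exact hpart
              · exact ihparts x hx

include hj HA HB HC in
lemma go_nxt : ∀ f y, n ≤ f + y → Inv N n y → ∀ z, memP (go N n f y) y z →
    z + 2 ≤ n → nxt (go N n f y) y z = N z := by
  intro f
  induction f with
  | zero =>
    intro y hf hInv
    rcases hInv with h | h <;> omega
  | succ f ih =>
    intro y hf hInv z hz hz2
    by_cases hstop : y + 1 = n
    · exfalso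
      simp only [go, if_pos hstop] at hz
      rcases hz with h | h
      · omega
      · simp [memP] at h; omega
    · rcases hInv with h | h
      · omega
      · obtain ⟨hy2, hlt⟩ := h
        have hB := HB y hy2
        simp only [go, if_neg hstop] at hz ⊢
        rcases hz with hz | hz
        · -- z = y : next is N y
          subst hz
          simp only [nxt]
          rw [if_pos (by omega : z < z + (N z - z))]
          omega
        · -- deeper
          have hge : y + (N y - y) ≤ z := (memP_le hz).1
          simp only [nxt]
          rw [if_neg (by omega : ¬ z < y + (N y - y))]
          have hyn : y + (N y - y) = N y := by omega
          rw [hyn] at hz ⊢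
          by_cases hend : N y = n
          · exfalso
            rw [if_pos hend] at hz
            simp [memP] at hz
            omega
          · rw [if_neg hend] at hz ⊢
            rcases inv_step hj HA HB HC hy2 hlt with h | h
            · exact absurd h hend
            · exact ih (N y) (by omega) h z hz hz2

include hj HA HB HC in
lemma go_closed : ∀ f y, n ≤ f + y → Inv N n y → ∀ p, memP (go N n f y) y p →
    p + 2 ≤ n → memP (go N n f y) y (N p) := by
  intro f
  induction f with
  | zero =>
    intro y hf hInv
    rcases hInv with h | h <;> omega
  | succ f ih =>
    intro y hf hInv p hp hp2
    by_cases hstop : y + 1 = n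
    · exfalso
      simp only [go, if_pos hstop] at hp
      rcases hp with h | h
      · omega
      · simp [memP] at h; omega
    · rcases hInv with h | h
      · omega
      · obtain ⟨hy2, hlt⟩ := h
        have hB := HB y hy2
        simp only [go, if_neg hstop] at hp ⊢
        have hyn : y + (N y - y) = N y := by omega
        rcases hp with hp | hp
        · -- p = y: N y is the next entry (or the tail head)
          subst hp
          refine Or.inr ?_
          rw [hyn]
          by_cases hend : N p = n
          · rw [if_pos hend]; simpa [memP] using hend
          · rw [if_neg hend]
            cases hf' : go N n f (N p) with
            | nil => exact memP_self _ _
            | cons a t => exact hf' ▸ memP_self _ _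
        · rw [hyn] at hp
          by_cases hend : N y = n
          · exfalso
            rw [if_pos hend] at hp
            simp [memP] at hp
            omega
          · rw [if_neg hend] at hp ⊢
            rcases inv_step hj HA HB HC hy2 hlt with h | h
            · exact absurd h hend
            · refine Or.inr ?_
              rw [hyn]
              exact ih (N y) (by omega) h p hp hp2

include hj HA HB HC in
lemma go_pred : ∀ f y, n ≤ f + y → Inv N n y → ∀ z, memP (go N n f y) y z →
    z ≠ y → z < n → ∃ p, memP (go N n f y) y p ∧ p + 2 ≤ n ∧ p < z ∧ N p = z := by
  intro f
  induction f with
  | zero =>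
    intro y hf hInv
    rcases hInv with h | h <;> omega
  | succ f ih =>
    intro y hf hInv z hz hzy hzn
    by_cases hstop : y + 1 = n
    · exfalso
      simp only [go, if_pos hstop] at hz
      rcases hz with h | h
      · exact hzy h
      · simp [memP] at h
        omega
    · rcases hInv with h | h
      · omega
      · obtain ⟨hy2, hlt⟩ := h
        have hB := HB y hy2
        simp only [go, if_neg hstop] at hz ⊢
        have hyn : y + (N y - y) = N y := by omega
        rcases hz with hz | hz
        · exact absurd hz hzy
        · rw [hyn] at hz
          by_cases hend : N y = n
          · rw [if_pos hend] at hz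
            simp [memP] at hz
            omega
          · rw [if_neg hend] at hz
            rcases inv_step hj HA HB HC hy2 hlt with h | h
            · exact absurd h hend
            · by_cases hzN : z = N y
              · exact ⟨y, memP_self _ _, by omega, by omega, by omega⟩
              · obtain ⟨p, hp1, hp2, hp3, hp4⟩ := ih (N y) (by omega) h z hz hzN hzn
                refine ⟨p, Or.inr ?_, hp2, hp3, hp4⟩
                rw [hyn, if_neg hend]
                exact hp1

include hj HA HB HC in
lemma go_fix (hn3 : 3 ≤ n)
    (HD : ∀ w, 2 ≤ w → w ≤ n → ∃ y, y + 2 ≤ n ∧ N y = w) :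
    ∀ z, z + 2 ≤ n → ¬ memP (go N n n 0) 0 z → ¬ memP (go N n n 1) 1 z →
    N z = z := by
  have Inv0 : Inv N n 0 := Or.inr ⟨by omega, (HB 0 (by omega)).1.trans_lt' (by omega)⟩
  have Inv1 : Inv N n 1 := Or.inr ⟨by omega, by have := (HB 1 (by omega)).1; omega⟩
  intro z
  induction z using Nat.strong_induction_on with
  | _ z ih =>
    intro hz2 hnot0 hnot1
    have hz0 : z ≠ 0 := fun h => hnot0 (h ▸ memP_self _ _)
    have hz1 : z ≠ 1 := fun h => hnot1 (h ▸ memP_self _ _)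
    obtain ⟨y, hy2, hyN⟩ := HD z (by omega) (by omega)
    by_cases hyz : y = z
    · exact hyz ▸ hyN
    · have hylt : y < z := by
        rcases HA y hy2 with h | h | h <;> omega
      by_cases hmem0 : memP (go N n n 0) 0 y
      · exact absurd (hyN ▸ go_closed hj HA HB HC n 0 (by omega) Inv0 y hmem0 hy2)
          hnot0
      · by_cases hmem1 : memP (go N n n 1) 1 y
        · exact absurd (hyN ▸ go_closed hj HA HB HC n 1 (by omega) Inv1 y hmem1 hy2)
            hnot1
        · have := ih y hylt hy2 hmem0 hmem1
          omega

include hj HA HB HC in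
lemma go_disjoint (hn3 : 3 ≤ n) :
    ∀ z, z < n → memP (go N n n 0) 0 z → memP (go N n n 1) 1 z → False := by
  have Inv0 : Inv N n 0 := Or.inr ⟨by omega, (HB 0 (by omega)).1.trans_lt' (by omega)⟩
  have Inv1 : Inv N n 1 := Or.inr ⟨by omega, by have := (HB 1 (by omega)).1; omega⟩
  intro z
  induction z using Nat.strong_induction_on with
  | _ z ih =>
    intro hzn h0 h1
    have hz1 : 1 ≤ z := (memP_le h1).1
    have hz0 : z ≠ 0 := by omega
    by_cases hz1' : z = 1
    · subst hz1'
      obtain ⟨p, hp1, hp2, hp3, hp4⟩ :=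
        go_pred hj HA HB HC n 0 (by omega) Inv0 1 h0 (by omega) (by omega)
      have := (HB p hp2).1
      omega
    · obtain ⟨p0, hp01, hp02, hp03, hp04⟩ :=
        go_pred hj HA HB HC n 0 (by omega) Inv0 z h0 (by omega) (by omega)
      obtain ⟨p1, hp11, hp12, hp13, hp14⟩ :=
        go_pred hj HA HB HC n 1 (by omega) Inv1 z h1 (by omega) (by omega)
      have hpp : p0 = p1 := HC p0 p1 hp02 hp12 (by omega)
      subst hpp
      exact ih p0 hp03 (by omega) hp01 hp11

lemma sum_zero_nil {t : List ℕ} (hpos : ∀ x ∈ t, 0 < x) (h : t.sum = 0) :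
    t = [] := by
  cases t with
  | nil => rfl
  | cons a s =>
    exfalso
    have := hpos a (by simp)
    simp [List.sum_cons] at h
    omega

lemma go_head {N : ℕ → ℕ} {n : ℕ} {f y : ℕ} (hf : 0 < f) (hy : y + 2 ≤ n) :
    (go N n f y).head? = some (N y - y) := by
  obtain ⟨f', rfl⟩ : ∃ f', f = f' + 1 := ⟨f - 1, by omega⟩
  simp only [go, if_neg (by omega : ¬ y + 1 = n)]
  rfl

include hj in
lemma rebuild {n : ℕ} {N : ℕ → ℕ} :
    ∀ (rest : List ℕ) (s : ℕ), rest ≠ [] → (∀ x ∈ rest, x = 1 ∨ x = j) →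
    s + rest.sum = n →
    (∀ z, memP rest s z → z + 2 ≤ n → N z = nxt rest s z) →
    ∀ f, n ≤ f + s → go N n f s = rest := by
  intro rest
  induction rest with
  | nil => intro s h; exact absurd rfl h
  | cons p t ih =>
    intro s _ hparts hsum Hnxt f hf
    have hppos : 0 < p := by rcases hparts p (by simp) with h | h <;> omega
    have htpos : ∀ x ∈ t, 0 < x := by
      intro x hx; rcases hparts x (by simp [hx]) with h | h <;> omega
    have hslt : s < n := by simp [List.sum_cons] at hsum; omega
    obtain ⟨f', rfl⟩ : ∃ f', f = f' + 1 := ⟨f - 1, by omega⟩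
    by_cases hstop : s + 1 = n
    · have hp1 : p = 1 ∧ t.sum = 0 := by
        simp [List.sum_cons] at hsum; omega
      have ht : t = [] := sum_zero_nil htpos hp1.2
      simp only [go, if_pos hstop]
      rw [ht, hp1.1]
    · have hs2 : s + 2 ≤ n := by omega
      have hNs : N s = s + p := by
        rw [Hnxt s (memP_self _ _) hs2]
        simp only [nxt]
        rw [if_pos (by omega : s < s + p)]
      simp only [go, if_neg hstop, hNs]
      have hpp : s + p - s = p := by omega
      rw [hpp]
      by_cases hend : s + p = n
      · have ht : t = [] := by
          apply sum_zero_nil htpos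
          simp [List.sum_cons] at hsum
          omega
        rw [if_pos hend, ht]
      · rw [if_neg hend]
        congr 1
        have htne : t ≠ [] := by
          intro h
          rw [h] at hsum
          simp [List.sum_cons] at hsum
          omega
        apply ih (s + p) htne (fun x hx => hparts x (by simp [hx]))
          (by simp [List.sum_cons] at hsum ⊢; omega)
          ?_ f' (by omega)
        intro z hz hz2
        have hzge := (memP_le hz).1
        rw [Hnxt z (Or.inr hz) hz2]
        simp only [nxt]
        rw [if_neg (by omega : ¬ z < s + p)]

end Rec

section Main

variable {n j : ℕ} {lam mu : List ℕ}
  (hj : 2 ≤ j) (hn : j < n)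
  (hl : ∀ x ∈ lam, x = 1 ∨ x = j) (hm : ∀ x ∈ mu, x = 1 ∨ x = j)
  (hls : lam.sum = n) (hms : mu.sum = n)
  (hlh : lam.head? = some j) (hmh : mu.head? = some 1)
  (hdisj : ∀ y, memP lam 0 y → memP mu 0 y → 0 < y → y < n → False)

include hj hl hm hls hms hlh hmh in
lemma Nmap_HA : ∀ y, y + 2 ≤ n → Nmap lam mu y = y ∨ Nmap lam mu y = y + 1 ∨
    Nmap lam mu y = y + j :=
  fun _ hy => (Nmap_cases hj hl hm hls hms hlh hmh hy).2.2

include hj hl hm hls hms hlh hmh in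
lemma Nmap_HB : ∀ y, y + 2 ≤ n → 2 ≤ Nmap lam mu y ∧ Nmap lam mu y ≤ n :=
  fun _ hy => ⟨(Nmap_cases hj hl hm hls hms hlh hmh hy).1,
    (Nmap_cases hj hl hm hls hms hlh hmh hy).2.1⟩

include hj hl hm hls hms hdisj in
lemma Nmap_HC : ∀ y y', y + 2 ≤ n → y' + 2 ≤ n →
    Nmap lam mu y = Nmap lam mu y' → y = y' :=
  fun _ _ hy hy' h => Nmap_inj hj hl hm hls hms hdisj hy hy' h

include hj hn hl hls in
lemma rebuild_lam {N : ℕ → ℕ}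
    (hN : ∀ z, memP lam 0 z → z + 2 ≤ n → N z = Nmap lam mu z) :
    go N n n 0 = lam := by
  apply rebuild hj lam 0
  · intro h
    rw [h] at hls
    simp at hls
    omega
  · exact hl
  · simpa using hls
  · intro z hz hz2
    rw [hN z hz hz2]
    unfold Nmap
    rw [if_pos hz]
  · omega

include hj hn hl hm hls hms hmh hdisj in
lemma rebuild_mu {N : ℕ → ℕ}
    (hN : ∀ z, memP mu 0 z → z + 2 ≤ n → N z = Nmap lam mu z) :
    mu = 1 :: go N n n 1 := by
  obtain ⟨t, rfl⟩ : ∃ t, mu = 1 :: t := by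
    cases mu with
    | nil => simp at hmh
    | cons a t =>
      simp at hmh
      exact ⟨t, by rw [hmh]⟩
  congr 1
  symm
  apply rebuild hj t 1
  · intro h
    rw [h] at hms
    simp at hms
    omega
  · exact fun x hx => hm x (by simp [hx])
  · simp [List.sum_cons] at hms; omega
  · intro z hz hz2
    have hz1 : 1 ≤ z := (memP_le hz).1
    have hzmu : memP (1 :: t) 0 z := Or.inr (by simpa using hz)
    have hznl : ¬ memP lam 0 z := fun h => hdisj z h hzmu (by omega) (by omega)
    rw [hN z hzmu hz2]
    unfold Nmap
    rw [if_neg hznl, if_pos hzmu]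
    simp only [nxt]
    rw [if_neg (by omega : ¬ z < 0 + 1)]
  · omega

include hj hn hl hm hls hms hlh hmh hdisj in
lemma Fperm_bound {y : ℕ} (hy : y + 2 ≤ n) : Nmap lam mu y - 2 < n - 1 := by
  have := Nmap_HB hj hl hm hls hms hlh hmh y hy
  omega

end Main

/-- the permutation attached to a valid pair -/
noncomputable def Fperm {n j : ℕ} {lam mu : List ℕ} (hj : 2 ≤ j) (hn : j < n)
    (hl : ∀ x ∈ lam, x = 1 ∨ x = j) (hm : ∀ x ∈ mu, x = 1 ∨ x = j)
    (hls : lam.sum = n) (hms : mu.sum = n)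
    (hlh : lam.head? = some j) (hmh : mu.head? = some 1)
    (hdisj : ∀ y, memP lam 0 y → memP mu 0 y → 0 < y → y < n → False) :
    Equiv.Perm (Fin (n - 1)) :=
  Equiv.ofBijective
    (fun i => ⟨Nmap lam mu i.val - 2,
      Fperm_bound hj hn hl hm hls hms hlh hmh hdisj (by have := i.isLt; omega)⟩)
    (by
      rw [← Finite.injective_iff_bijective]
      intro i i' h
      simp only [Fin.mk.injEq] at h
      have hb := Nmap_HB hj hl hm hls hms hlh hmh i.val (by have := i.isLt; omega)
      have hb' := Nmap_HB hj hl hm hls hms hlh hmh i'.val (by have := i'.isLt; omega)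
      have : Nmap lam mu i.val = Nmap lam mu i'.val := by omega
      exact Fin.ext (Nmap_HC hj hl hm hls hms hdisj i.val i'.val
        (by have := i.isLt; omega) (by have := i'.isLt; omega) this))

lemma Fperm_apply {n j : ℕ} {lam mu : List ℕ} (hj : 2 ≤ j) (hn : j < n)
    (hl : ∀ x ∈ lam, x = 1 ∨ x = j) (hm : ∀ x ∈ mu, x = 1 ∨ x = j)
    (hls : lam.sum = n) (hms : mu.sum = n)
    (hlh : lam.head? = some j) (hmh : mu.head? = some 1)
    (hdisj : ∀ y, memP lam 0 y → memP mu 0 y → 0 < y → y < n → False)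
    (i : Fin (n - 1)) :
    (Fperm hj hn hl hm hls hms hlh hmh hdisj i : ℕ) = Nmap lam mu i.val - 2 :=
  rfl

lemma mem_PSums_iff {l : List ℕ} (hpos : ∀ x ∈ l, 0 < x) {y : ℕ} :
    y ∈ PSums l ↔ (memP l 0 y ∧ 0 < y) := by
  rw [psums_memP hpos 0 y]
  constructor
  · rintro ⟨k, h1, h2, h3⟩
    exact ⟨k, h1, h2, by omega⟩
  · rintro ⟨k, h1, h2, h3⟩
    exact ⟨k, h1, h2, by omega⟩

lemma pos_of_parts {j : ℕ} (hj : 2 ≤ j) {l : List ℕ}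
    (hl : ∀ x ∈ l, x = 1 ∨ x = j) : ∀ x ∈ l, 0 < x :=
  fun x hx => by rcases hl x hx with h | h <;> omega

lemma disj_of_inter {n j : ℕ} (hj : 2 ≤ j) {lam mu : List ℕ}
    (hl : ∀ x ∈ lam, x = 1 ∨ x = j) (hm : ∀ x ∈ mu, x = 1 ∨ x = j)
    (hI : PSums lam ∩ PSums mu = {n}) :
    ∀ y, memP lam 0 y → memP mu 0 y → 0 < y → y < n → False := by
  intro y h1 h2 hy hyn
  have : y ∈ PSums lam ∩ PSums mu :=
    ⟨(mem_PSums_iff (pos_of_parts hj hl)).mpr ⟨h1, hy⟩,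
     (mem_PSums_iff (pos_of_parts hj hm)).mpr ⟨h2, hy⟩⟩
  rw [hI] at this
  simp at this
  omega

lemma Fperm_disp {n j : ℕ} {lam mu : List ℕ} (hj : 2 ≤ j) (hn : j < n)
    (hl : ∀ x ∈ lam, x = 1 ∨ x = j) (hm : ∀ x ∈ mu, x = 1 ∨ x = j)
    (hls : lam.sum = n) (hms : mu.sum = n)
    (hlh : lam.head? = some j) (hmh : mu.head? = some 1)
    (hdisj : ∀ y, memP lam 0 y → memP mu 0 y → 0 < y → y < n → False)
    (i : Fin (n - 1)) :
    (((Fperm hj hn hl hm hls hms hlh hmh hdisj i : Fin (n - 1)) : ℕ) : ℤ)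
      - ((i : ℕ) : ℤ) ∈ ({-2, -1, (j : ℤ) - 2} : Set ℤ) := by
  have hi : (i : ℕ) + 2 ≤ n := by have := i.isLt; omega
  have happ := Fperm_apply hj hn hl hm hls hms hlh hmh hdisj i
  have hb := Nmap_HB hj hl hm hls hms hlh hmh i.val hi
  simp only [Set.mem_insert_iff, Set.mem_singleton_iff]
  rcases Nmap_HA hj hl hm hls hms hlh hmh i.val hi with h | h | h
  · left; rw [happ]; omega
  · right; left; rw [happ]; omega
  · right; right; rw [happ]; omega

theorem stmt8_main (n j : ℕ) (hj : 2 ≤ j) (hn : j < n) :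
    Nonempty (
      {p : List ℕ × List ℕ //
        (∀ x ∈ p.1, x = 1 ∨ x = j) ∧ (∀ x ∈ p.2, x = 1 ∨ x = j) ∧
        p.1.sum = n ∧ p.2.sum = n ∧
        p.1.head? = some j ∧ p.2.head? = some 1 ∧
        PSums p.1 ∩ PSums p.2 = {n}} ≃
      {π : Equiv.Perm (Fin (n - 1)) // ∀ i : Fin (n - 1),
        (((π i : Fin (n - 1)) : ℕ) : ℤ) - ((i : ℕ) : ℤ)
          ∈ ({-2, -1, (j : ℤ) - 2} : Set ℤ)}) := by
  classical
  have hn3 : 3 ≤ n := by omega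
  set PairT := {p : List ℕ × List ℕ //
        (∀ x ∈ p.1, x = 1 ∨ x = j) ∧ (∀ x ∈ p.2, x = 1 ∨ x = j) ∧
        p.1.sum = n ∧ p.2.sum = n ∧
        p.1.head? = some j ∧ p.2.head? = some 1 ∧
        PSums p.1 ∩ PSums p.2 = {n}} with hPairT
  set F : PairT → {π : Equiv.Perm (Fin (n - 1)) // ∀ i : Fin (n - 1),
        (((π i : Fin (n - 1)) : ℕ) : ℤ) - ((i : ℕ) : ℤ)
          ∈ ({-2, -1, (j : ℤ) - 2} : Set ℤ)} :=
    fun p => ⟨Fperm hj hn p.2.1 p.2.2.1 p.2.2.2.1 p.2.2.2.2.1 p.2.2.2.2.2.1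
        p.2.2.2.2.2.2.1
        (disj_of_inter hj p.2.1 p.2.2.1 p.2.2.2.2.2.2.2),
      Fperm_disp hj hn _ _ _ _ _ _ _⟩ with hF
  refine ⟨Equiv.ofBijective F ⟨?_, ?_⟩⟩
  · -- injectivity
    rintro ⟨⟨lam, mu⟩, c1, c2, c3, c4, c5, c6, c7⟩
      ⟨⟨lam', mu'⟩, c1', c2', c3', c4', c5', c6', c7'⟩ h
    have hd := disj_of_inter hj c1 c2 c7
    have hd' := disj_of_inter hj c1' c2' c7'
    have hperm : Fperm hj hn c1 c2 c3 c4 c5 c6 hd =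
        Fperm hj hn c1' c2' c3' c4' c5' c6' hd' := congrArg Subtype.val h
    have hNN : ∀ z, z + 2 ≤ n → Nmap lam mu z = Nmap lam' mu' z := by
      intro z hz
      have hzlt : z < n - 1 := by omega
      have := congrArg (fun e : Equiv.Perm (Fin (n - 1)) => (e ⟨z, hzlt⟩ : ℕ))
        hperm
      simp only [Fperm_apply] at this
      have this2 : Nmap lam mu z - 2 = Nmap lam' mu' z - 2 := this
      clear this
      have hb := Nmap_HB (lam := lam) (mu := mu) hj c1 c2 c3 c4 c5 c6 z hz
      have hb' := Nmap_HB (lam := lam') (mu := mu') hj c1' c2' c3' c4' c5' c6' z hz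
      omega
    have hlam : lam = lam' := by
      have h1 : go (Nmap lam mu) n n 0 = lam :=
        rebuild_lam hj hn c1 c3 (fun _ _ _ => rfl)
      have h2 : go (Nmap lam mu) n n 0 = lam' :=
        rebuild_lam hj hn c1' c3' (fun z _ hz2 => hNN z hz2)
      rw [← h1, h2]
    have hmu : mu = mu' := by
      have h1 : mu = 1 :: go (Nmap lam mu) n n 1 :=
        rebuild_mu hj hn c1 c2 c3 c4 c6 hd (fun _ _ _ => rfl)
      have h2 : mu' = 1 :: go (Nmap lam mu) n n 1 :=
        rebuild_mu hj hn c1' c2' c3' c4' c6' hd' (fun z _ hz2 => hNN z hz2)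
      rw [h1, h2]
    exact Subtype.ext (by simp [hlam, hmu])
  · -- surjectivity
    rintro ⟨π, hπ⟩
    set N : ℕ → ℕ :=
      fun y => if h : y < n - 1 then ((π ⟨y, h⟩ : Fin (n - 1)) : ℕ) + 2 else y
      with hNdef
    have hNval : ∀ y (h : y < n - 1), N y = ((π ⟨y, h⟩ : Fin (n - 1)) : ℕ) + 2 :=
      fun y h => by simp [hNdef, dif_pos h]
    have HA : ∀ y, y + 2 ≤ n → N y = y ∨ N y = y + 1 ∨ N y = y + j := by
      intro y hy
      have h : y < n - 1 := by omega
      have hd := hπ ⟨y, h⟩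
      simp only [Set.mem_insert_iff, Set.mem_singleton_iff] at hd
      rw [hNval y h]
      rcases hd with hd | hd | hd
      · left; omega
      · right; left; omega
      · right; right; omega
    have HB : ∀ y, y + 2 ≤ n → 2 ≤ N y ∧ N y ≤ n := by
      intro y hy
      have h : y < n - 1 := by omega
      have hlt := (π ⟨y, h⟩).isLt
      rw [hNval y h]
      omega
    have HC : ∀ y y', y + 2 ≤ n → y' + 2 ≤ n → N y = N y' → y = y' := by
      intro y y' hy hy' heq
      have h : y < n - 1 := by omega
      have h' : y' < n - 1 := by omega
      rw [hNval y h, hNval y' h'] at heq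
      have := π.injective (Fin.ext (show ((π ⟨y, h⟩ : Fin (n - 1)) : ℕ) =
        ((π ⟨y', h'⟩ : Fin (n - 1)) : ℕ) by omega))
      exact congrArg Fin.val this
    have HD : ∀ w, 2 ≤ w → w ≤ n → ∃ y, y + 2 ≤ n ∧ N y = w := by
      intro w h2 hwn
      have hw : w - 2 < n - 1 := by omega
      refine ⟨(π.symm ⟨w - 2, hw⟩).val, by have := (π.symm ⟨w - 2, hw⟩).isLt; omega, ?_⟩
      rw [hNval _ (π.symm ⟨w - 2, hw⟩).isLt]
      simp only [Fin.eta, Equiv.apply_symm_apply]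
      omega
    have Inv0 : Inv N n 0 := Or.inr ⟨by omega, by have := (HB 0 (by omega)).1; omega⟩
    have Inv1 : Inv N n 1 := Or.inr ⟨by omega, by have := (HB 1 (by omega)).1; omega⟩
    set lam := go N n n 0 with hlamdef
    set mu : List ℕ := 1 :: go N n n 1 with hmudef
    obtain ⟨hsum0, hparts0⟩ := go_spec hj HA HB HC n 0 (by omega) Inv0
    obtain ⟨hsum1, hparts1⟩ := go_spec hj HA HB HC n 1 (by omega) Inv1
    have hls : lam.sum = n := by rw [hlamdef, hsum0]; omega
    have hms : mu.sum = n := by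
      rw [hmudef]
      simp only [List.sum_cons, hsum1]
      omega
    have hl : ∀ x ∈ lam, x = 1 ∨ x = j := hparts0
    have hm : ∀ x ∈ mu, x = 1 ∨ x = j := by
      intro x hx
      rw [hmudef] at hx
      rcases List.mem_cons.mp hx with h | h
      · exact Or.inl h
      · exact hparts1 x h
    have hN0 : N 0 = j := by
      have hb := (HB 0 (by omega)).1
      rcases HA 0 (by omega) with h | h | h <;> omega
    have hlh : lam.head? = some j := by
      rw [hlamdef, go_head (by omega) (by omega)]
      simp [hN0]
    have hmh : mu.head? = some 1 := by rw [hmudef]; rfl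
    have hdisjP : ∀ y, memP lam 0 y → memP mu 0 y → 0 < y → y < n → False := by
      intro y h1 h2 hy hyn
      rw [hmudef] at h2
      rcases h2 with h2 | h2
      · omega
      · exact go_disjoint hj HA HB HC hn3 y hyn h1 (by simpa using h2)
    have hI : PSums lam ∩ PSums mu = {n} := by
      ext y
      simp only [Set.mem_inter_iff, Set.mem_singleton_iff]
      constructor
      · rintro ⟨hy1, hy2⟩
        rw [mem_PSums_iff (pos_of_parts hj hl)] at hy1
        rw [mem_PSums_iff (pos_of_parts hj hm)] at hy2
        have hub := (memP_le hy1.1).2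
        by_contra hne
        exact hdisjP y hy1.1 hy2.1 hy1.2 (by omega)
      · rintro rfl
        have t1 := memP_total lam 0
        have t2 := memP_total mu 0
        rw [zero_add, hls] at t1
        rw [zero_add, hms] at t2
        constructor
        · exact (mem_PSums_iff (pos_of_parts hj hl)).mpr ⟨t1, by omega⟩
        · exact (mem_PSums_iff (pos_of_parts hj hm)).mpr ⟨t2, by omega⟩
    refine ⟨⟨⟨lam, mu⟩, hl, hm, hls, hms, hlh, hmh, hI⟩, ?_⟩
    apply Subtype.ext
    apply Equiv.ext
    intro i
    apply Fin.ext
    have hi2 : i.val + 2 ≤ n := by have := i.isLt; omega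
    have hkey : Nmap lam mu i.val = N i.val := by
      by_cases hA : memP lam 0 i.val
      · unfold Nmap
        rw [if_pos hA]
        rw [hlamdef]
        exact go_nxt hj HA HB HC n 0 (by omega) Inv0 i.val (hlamdef ▸ hA) hi2
      · by_cases hB : memP mu 0 i.val
        · unfold Nmap
          rw [if_neg hA, if_pos hB]
          have hi0 : i.val ≠ 0 := fun h => hA (by rw [h] at hA ⊢; exact memP_self _ _)
          rw [hmudef] at hB
          rcases hB with h' | h'
          · omega
          · rw [hmudef]
            show nxt (1 :: go N n n 1) 0 i.val = N i.val
            simp only [nxt]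
            rw [if_neg (by omega : ¬ i.val < 0 + 1)]
            have := go_nxt hj HA HB HC n 1 (by omega) Inv1 i.val (by simpa using h') hi2
            simpa using this
        · unfold Nmap
          rw [if_neg hA, if_neg hB]
          refine (go_fix hj HA HB HC hn3 HD i.val hi2 (hlamdef ▸ hA) ?_).symm
          intro h
          exact hB (hmudef ▸ Or.inr (by simpa using h))
    have hb := Nmap_HB (lam := lam) (mu := mu) hj hl hm hls hms hlh hmh i.val hi2
    have hNv := hNval i.val i.isLt
    rw [Fin.eta] at hNv
    show Nmap lam mu i.val - 2 = ((π i : Fin (n - 1)) : ℕ)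
    omega

end Stmt8


/-- For `j ≥ 2` and `n > j`, there is a bijection between indecomposable meanders
`(λ, μ)` on `n` nodes with parts in `{1, j}`, `λ₁ = j`, `μ₁ = 1`, and
`PS(λ) ∩ PS(μ) = {n}`, and permutations of `{1,…,n−1}` (modelled on `Fin (n-1)`)
all of whose displacements lie in `{−2, −1, j−2}`. -/
theorem stmt8 (n j : ℕ) (hj : 2 ≤ j) (hn : j < n) :
    Nonempty (
      {p : List ℕ × List ℕ //
        (∀ x ∈ p.1, x = 1 ∨ x = j) ∧ (∀ x ∈ p.2, x = 1 ∨ x = j) ∧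
        p.1.sum = n ∧ p.2.sum = n ∧
        p.1.head? = some j ∧ p.2.head? = some 1 ∧
        PSums p.1 ∩ PSums p.2 = {n}} ≃
      {π : Equiv.Perm (Fin (n - 1)) // ∀ i : Fin (n - 1),
        (((π i : Fin (n - 1)) : ℕ) : ℤ) - ((i : ℕ) : ℤ)
          ∈ ({-2, -1, (j : ℤ) - 2} : Set ℤ)}) := by
  exact Stmt8.stmt8_main n j hj hn
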